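/- For s > 0, the function I(q) = −(q+s)·log(q+s) + q(1+s)·log(1+s) + (1−q)·s·log s on [0,1] attains its maximum over [0,1] at the unique point q* = (1+s)^{1+s}/(e·s^s) − s, and moreover q* ∈ (0,1). -/

import Mathlib

open Real Set

theorem poisson_mi_max (s qstar : ℝ) (hs : 0 < s)
    (hq : qstar = (1 + s) ^ (1 + s) / (Real.exp 1 * s ^ s) - s) :
    qstar ∈ Ioo (0:ℝ) 1 ∧
    (∀ q ∈ Icc (0:ℝ) 1,
      -(q + s) * Real.log (q + s) + q * (1 + s) * Real.log (1 + s) + (1 - q) * s * Real.log s ≤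
      -(qstar + s) * Real.log (qstar + s) + qstar * (1 + s) * Real.log (1 + s)
        + (1 - qstar) * s * Real.log s) ∧
    (∀ q ∈ Icc (0:ℝ) 1,
      -(q + s) * Real.log (q + s) + q * (1 + s) * Real.log (1 + s) + (1 - q) * s * Real.log s =
      -(qstar + s) * Real.log (qstar + s) + qstar * (1 + s) * Real.log (1 + s)
        + (1 - qstar) * s * Real.log s → q = qstar) := by
  have hs1 : (0:ℝ) < 1 + s := by linarith
  have hsne : s ≠ 0 := ne_of_gt hs
  have hs1ne : (1 + s) ≠ 0 := ne_of_gt hs1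
  set A : ℝ := (1 + s) * Real.log (1 + s) - s * Real.log s with hA
  have hT : qstar + s = Real.exp (A - 1) := by
    rw [hq, Real.rpow_def_of_pos hs1, Real.rpow_def_of_pos hs, sub_add_cancel,
      ← Real.exp_add, ← Real.exp_sub]
    ring_nf
    congr 1
    rw [hA]
    ring
  have hTpos : 0 < qstar + s := hT ▸ Real.exp_pos _
  have hlogT : Real.log (qstar + s) = A - 1 := by rw [hT, Real.log_exp]
  -- lower bound: log s < A - 1
  have hL : 1 / (1 + s) < Real.log (1 + s) - Real.log s := by
    have h := Real.log_lt_sub_one_of_pos (x := s / (1 + s)) (by positivity)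
      (by
        intro h
        rw [div_eq_one_iff_eq hs1ne] at h
        linarith)
    rw [Real.log_div hsne hs1ne] at h
    have h2 : s / (1 + s) - 1 = -(1 / (1 + s)) := by field_simp; ring
    rw [h2] at h
    linarith
  have hLo : Real.log s < A - 1 := by
    have := mul_lt_mul_of_pos_left hL hs1
    have h3 : (1 + s) * (1 / (1 + s)) = 1 := by field_simp
    nlinarith [this, h3]
  -- upper bound: A - 1 < log (1 + s)
  have hU : Real.log (1 + s) - Real.log s < 1 / s := by
    have h := Real.log_lt_sub_one_of_pos (x := (1 + s) / s) (by positivity)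
      (by
        intro h
        rw [div_eq_one_iff_eq hsne] at h
        linarith)
    rw [Real.log_div hs1ne hsne] at h
    have h2 : (1 + s) / s - 1 = 1 / s := by field_simp; ring
    rw [h2] at h
    linarith
  have hHi : A - 1 < Real.log (1 + s) := by
    have := mul_lt_mul_of_pos_left hU hs
    have h3 : s * (1 / s) = 1 := by field_simp
    nlinarith [this, h3]
  have hTlo : s < qstar + s := by
    rw [hT, ← Real.exp_log hs]
    exact Real.exp_lt_exp.mpr hLo
  have hThi : qstar + s < 1 + s := by
    rw [hT]
    calc Real.exp (A - 1) < Real.exp (Real.log (1 + s)) := Real.exp_lt_exp.mpr hHi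
      _ = 1 + s := Real.exp_log hs1
  have hmem : qstar ∈ Ioo (0:ℝ) 1 := ⟨by linarith, by linarith⟩
  -- strict inequality for q ≠ qstar
  have main : ∀ q ∈ Icc (0:ℝ) 1, q ≠ qstar →
      -(q + s) * Real.log (q + s) + q * (1 + s) * Real.log (1 + s) + (1 - q) * s * Real.log s <
      -(qstar + s) * Real.log (qstar + s) + qstar * (1 + s) * Real.log (1 + s)
        + (1 - qstar) * s * Real.log s := by
    intro q hq' hne
    have ht : 0 < q + s := by linarith [hq'.1]
    have htne : q + s ≠ 0 := ne_of_gt ht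
    have hx : Real.log ((qstar + s) / (q + s)) < (qstar + s) / (q + s) - 1 := by
      refine Real.log_lt_sub_one_of_pos (by positivity) ?_
      intro h
      rw [div_eq_one_iff_eq htne] at h
      exact hne (by linarith)
    rw [Real.log_div (ne_of_gt hTpos) htne] at hx
    have hmul := mul_lt_mul_of_pos_left hx ht
    have hfs : (q + s) * ((qstar + s) / (q + s) - 1) = (qstar + s) - (q + s) := by
      field_simp
    rw [hfs] at hmul
    rw [hlogT] at hmul ⊢
    nlinarith [hmul]
  refine ⟨hmem, ?_, ?_⟩
  · intro q hq'
    by_cases h : q = qstar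
    · rw [h]
    · exact le_of_lt (main q hq' h)
  · intro q hq' heq
    by_contra h
    exact absurd heq (ne_of_lt (main q hq' h))
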